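/- Let W be a real symmetric m×m matrix satisfying 1ᵀW = 1ᵀ, W1 = 1 and ρ(W − 11ᵀ/m) < 1. Let ε₀, ε₁, ε₂, … be a sequence of (deterministic) vectors in ℝᵐ and define z_{t+1} := W^{t+1}z₀ + Σ_{s=0}^{t} Wˢ(W−I)ε_{t−s} for a given z₀ ∈ ℝᵐ. Let σ_t² := (1/m)·‖ε_t − (11ᵀ/m)ε_t‖² be the sample variance of ε_t. If σ_t² → 0 as t → ∞, then ‖z_{t+1} − (11ᵀ/m)z₀‖ → 0 as t → ∞; that is, every node state converges to the average μ = (1/m)·1ᵀz₀ of the initial values. -/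

import Mathlib

open Matrix Finset Filter

/-- The m×m averaging matrix `11ᵀ/m`. -/
noncomputable def avgMat (m : ℕ) : Matrix (Fin m) (Fin m) ℝ := Matrix.of fun _ _ => (1 : ℝ) / m

/-- The Euclidean norm of a vector in `ℝᵐ`. -/
noncomputable def eucNorm {m : ℕ} (v : Fin m → ℝ) : ℝ := Real.sqrt (∑ i, v i ^ 2)

section Aux

lemma eucNorm_nonneg {m : ℕ} (v : Fin m → ℝ) : 0 ≤ eucNorm v := Real.sqrt_nonneg _

lemma eucNorm_eq_norm {m : ℕ} (v : Fin m → ℝ) :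
    eucNorm v = ‖(WithLp.equiv 2 (Fin m → ℝ)).symm v‖ := by
  rw [EuclideanSpace.norm_eq]
  unfold eucNorm
  congr 1
  refine Finset.sum_congr rfl fun i _ => ?_
  rw [Real.norm_eq_abs, sq_abs]
  rfl

lemma eucNorm_add_le {m : ℕ} (v w : Fin m → ℝ) :
    eucNorm (v + w) ≤ eucNorm v + eucNorm w := by
  simp only [eucNorm_eq_norm, WithLp.toLp_add]
  exact norm_add_le ((WithLp.equiv 2 (Fin m → ℝ)).symm v) ((WithLp.equiv 2 (Fin m → ℝ)).symm w)

lemma eucNorm_sum_le {m : ℕ} {ι : Type*} (s : Finset ι) (f : ι → Fin m → ℝ) :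
    eucNorm (∑ i ∈ s, f i) ≤ ∑ i ∈ s, eucNorm (f i) := by
  classical
  induction s using Finset.induction with
  | empty => simp [eucNorm]
  | insert _ _ h ih =>
      rw [Finset.sum_insert h, Finset.sum_insert h]
      exact le_trans (eucNorm_add_le _ _) (by linarith)

lemma abs_le_eucNorm {m : ℕ} (v : Fin m → ℝ) (j : Fin m) : |v j| ≤ eucNorm v := by
  rw [← Real.sqrt_sq_eq_abs]
  exact Real.sqrt_le_sqrt (Finset.single_le_sum (fun i _ => sq_nonneg (v i)) (Finset.mem_univ j))

/-- A generic operator-norm style bound for `mulVec`. -/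
lemma exists_mulVec_bound {m : ℕ} (A : Matrix (Fin m) (Fin m) ℝ) :
    ∃ C : ℝ, 0 ≤ C ∧ ∀ x, eucNorm (A.mulVec x) ≤ C * eucNorm x := by
  refine ⟨Real.sqrt (∑ i, (∑ j, |A i j|) ^ 2), Real.sqrt_nonneg _, fun x => ?_⟩
  have hx : 0 ≤ eucNorm x := eucNorm_nonneg x
  have key : ∀ i, (A.mulVec x i) ^ 2 ≤ (∑ j, |A i j|) ^ 2 * eucNorm x ^ 2 := by
    intro i
    have h1 : |A.mulVec x i| ≤ (∑ j, |A i j|) * eucNorm x := by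
      rw [Matrix.mulVec, dotProduct]
      calc |∑ j, A i j * x j| ≤ ∑ j, |A i j * x j| := Finset.abs_sum_le_sum_abs _ _
        _ ≤ ∑ j, |A i j| * eucNorm x := by
            refine Finset.sum_le_sum fun j _ => ?_
            rw [abs_mul]
            exact mul_le_mul_of_nonneg_left (abs_le_eucNorm x j) (abs_nonneg _)
        _ = (∑ j, |A i j|) * eucNorm x := by rw [Finset.sum_mul]
    calc (A.mulVec x i) ^ 2 = |A.mulVec x i| ^ 2 := (sq_abs _).symm
      _ ≤ ((∑ j, |A i j|) * eucNorm x) ^ 2 := pow_le_pow_left₀ (abs_nonneg _) h1 2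
      _ = (∑ j, |A i j|) ^ 2 * eucNorm x ^ 2 := by ring
  have hle : eucNorm (A.mulVec x) ≤ Real.sqrt ((∑ i, (∑ j, |A i j|) ^ 2) * eucNorm x ^ 2) := by
    apply Real.sqrt_le_sqrt
    rw [Finset.sum_mul]
    exact Finset.sum_le_sum fun i _ => key i
  calc eucNorm (A.mulVec x) ≤ Real.sqrt ((∑ i, (∑ j, |A i j|) ^ 2) * eucNorm x ^ 2) := hle
    _ = Real.sqrt (∑ i, (∑ j, |A i j|) ^ 2) * eucNorm x := by
        rw [Real.sqrt_mul (Finset.sum_nonneg fun i _ => sq_nonneg _), Real.sqrt_sq hx]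

/-- Real orthogonal matrices preserve the Euclidean norm. -/
lemma eucNorm_mulVec_of_orth {m : ℕ} {U : Matrix (Fin m) (Fin m) ℝ}
    (hU : Uᵀ * U = 1) (x : Fin m → ℝ) : eucNorm (U.mulVec x) = eucNorm x := by
  unfold eucNorm
  congr 1
  have h1 : ∀ (v : Fin m → ℝ), ∑ i, v i ^ 2 = v ⬝ᵥ v := by
    intro v; simp [dotProduct, sq]
  rw [h1, h1, Matrix.dotProduct_mulVec]
  have h2 : (U *ᵥ x) ᵥ* U = x ᵥ* (Uᵀ * U) := by
    rw [← Matrix.vecMul_vecMul, ← Matrix.vecMul_transpose]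
  rw [h2, hU, Matrix.vecMul_one]

lemma eucNorm_diag_le {m : ℕ} {d : Fin m → ℝ} {r : ℝ} (hr0 : 0 ≤ r)
    (hd : ∀ i, |d i| ≤ r) (w : Fin m → ℝ) :
    eucNorm ((Matrix.diagonal d).mulVec w) ≤ r * eucNorm w := by
  unfold eucNorm
  rw [← Real.sqrt_sq hr0, ← Real.sqrt_mul (sq_nonneg r)]
  apply Real.sqrt_le_sqrt
  rw [Finset.mul_sum]
  refine Finset.sum_le_sum fun i _ => ?_
  rw [Matrix.mulVec_diagonal]
  calc (d i * w i) ^ 2 = d i ^ 2 * w i ^ 2 := by ring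
    _ ≤ r ^ 2 * w i ^ 2 := by
        apply mul_le_mul_of_nonneg_right _ (sq_nonneg _)
        rw [← sq_abs (d i)]
        exact pow_le_pow_left₀ (abs_nonneg _) (hd i) 2

/-- A real symmetric matrix whose eigenvalues all have absolute value at most `r` contracts
the Euclidean norm by a factor `r`. -/
lemma eucNorm_symm_mulVec_le {m : ℕ} {B : Matrix (Fin m) (Fin m) ℝ} (hB : B.IsHermitian)
    {r : ℝ} (hr0 : 0 ≤ r) (hev : ∀ i, |hB.eigenvalues i| ≤ r) (v : Fin m → ℝ) :
    eucNorm (B.mulVec v) ≤ r * eucNorm v := by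
  set U : Matrix (Fin m) (Fin m) ℝ := (hB.eigenvectorUnitary : Matrix (Fin m) (Fin m) ℝ) with hUdef
  have hmem := hB.eigenvectorUnitary.2
  rw [Matrix.mem_unitaryGroup_iff] at hmem
  have hstar : star U = Uᵀ := Matrix.conjTranspose_eq_transpose_of_trivial U
  have hUUt : U * Uᵀ = 1 := by rw [← hstar]; exact hmem
  have hUtU : Uᵀ * U = 1 := mul_eq_one_comm.mp hUUt
  have hspec : B = U * Matrix.diagonal hB.eigenvalues * Uᵀ := by
    have h := hB.spectral_theorem
    simp only [Unitary.conjStarAlgAut_apply] at h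
    rw [← hUdef, hstar] at h
    simpa [RCLike.ofReal_real_eq_id] using h
  have hBv : B.mulVec v = U.mulVec ((Matrix.diagonal hB.eigenvalues).mulVec (Uᵀ.mulVec v)) := by
    rw [Matrix.mulVec_mulVec, Matrix.mulVec_mulVec, ← hspec]
  rw [hBv, eucNorm_mulVec_of_orth hUtU]
  have hUt_orth : (Uᵀ)ᵀ * Uᵀ = 1 := by rw [Matrix.transpose_transpose]; exact hUUt
  calc eucNorm ((Matrix.diagonal hB.eigenvalues).mulVec (Uᵀ.mulVec v))
      ≤ r * eucNorm (Uᵀ.mulVec v) := eucNorm_diag_le hr0 hev _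
    _ = r * eucNorm v := by rw [eucNorm_mulVec_of_orth hUt_orth]

/-- Geometric convolution with a vanishing sequence vanishes. -/
lemma conv_tendsto_zero {r : ℝ} (hr0 : 0 ≤ r) (hr1 : r < 1) {a : ℕ → ℝ} (ha0 : ∀ t, 0 ≤ a t)
    (ha : Tendsto a atTop (nhds 0)) :
    Tendsto (fun t => ∑ s ∈ Finset.range (t + 1), r ^ s * a (t - s)) atTop (nhds 0) := by
  have h1r : 0 < 1 - r := by linarith
  obtain ⟨M, hM⟩ := ha.bddAbove_range
  have hMb : ∀ t, a t ≤ M := fun t => hM (Set.mem_range_self t)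
  have hM0 : 0 ≤ M := le_trans (ha0 0) (hMb 0)
  have hgeom : ∀ n : ℕ, ∑ s ∈ Finset.range n, r ^ s ≤ (1 - r)⁻¹ := by
    intro n
    have hs := hasSum_geometric_of_lt_one hr0 hr1
    calc ∑ s ∈ Finset.range n, r ^ s ≤ ∑' s, r ^ s :=
          Summable.sum_le_tsum _ (fun i _ => pow_nonneg hr0 i) hs.summable
      _ = (1 - r)⁻¹ := hs.tsum_eq
  rw [Metric.tendsto_atTop] at ha ⊢
  intro ε hε
  obtain ⟨N₁, hN₁⟩ := ha (ε * (1 - r) / 2) (by positivity)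
  have hN₁' : ∀ t ≥ N₁, a t ≤ ε * (1 - r) / 2 := by
    intro t ht
    have h := hN₁ t ht
    rw [Real.dist_eq, sub_zero, abs_of_nonneg (ha0 t)] at h
    exact h.le
  have htail : Tendsto (fun k : ℕ => (N₁ * M) * r ^ k) atTop (nhds 0) := by
    simpa using (tendsto_pow_atTop_nhds_zero_of_lt_one hr0 hr1).const_mul ((N₁ : ℝ) * M)
  rw [Metric.tendsto_atTop] at htail
  obtain ⟨N₂, hN₂⟩ := htail (ε / 2) (by positivity)
  have hN₂' : (N₁ : ℝ) * M * r ^ N₂ < ε / 2 := by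
    have h := hN₂ N₂ le_rfl
    rw [Real.dist_eq, sub_zero] at h
    exact lt_of_le_of_lt (le_abs_self _) h
  refine ⟨N₁ + N₂, fun t ht => ?_⟩
  have hterm0 : ∀ s, 0 ≤ r ^ s * a (t - s) := fun s => mul_nonneg (pow_nonneg hr0 s) (ha0 _)
  rw [Real.dist_eq, sub_zero, abs_of_nonneg (Finset.sum_nonneg fun s _ => hterm0 s)]
  have hsplit : ∑ s ∈ Finset.range (t + 1), r ^ s * a (t - s)
      = ∑ s ∈ Finset.range (t - N₁ + 1), r ^ s * a (t - s)
        + ∑ s ∈ Finset.Ico (t - N₁ + 1) (t + 1), r ^ s * a (t - s) := by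
    rw [Finset.range_eq_Ico, Finset.range_eq_Ico]
    exact (Finset.sum_Ico_consecutive (fun s => r ^ s * a (t - s)) (Nat.zero_le (t - N₁ + 1)) (by omega : t - N₁ + 1 ≤ t + 1)).symm
  rw [hsplit]
  have hpart1 : ∑ s ∈ Finset.range (t - N₁ + 1), r ^ s * a (t - s) ≤ ε / 2 := by
    calc ∑ s ∈ Finset.range (t - N₁ + 1), r ^ s * a (t - s)
        ≤ ∑ s ∈ Finset.range (t - N₁ + 1), r ^ s * (ε * (1 - r) / 2) := by
          refine Finset.sum_le_sum fun s hs => ?_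
          refine mul_le_mul_of_nonneg_left ?_ (pow_nonneg hr0 s)
          apply hN₁'
          rw [Finset.mem_range] at hs
          omega
      _ = (∑ s ∈ Finset.range (t - N₁ + 1), r ^ s) * (ε * (1 - r) / 2) := by
          rw [Finset.sum_mul]
      _ ≤ (1 - r)⁻¹ * (ε * (1 - r) / 2) := by
          apply mul_le_mul_of_nonneg_right (hgeom _) (by positivity)
      _ = ε / 2 := by field_simp
  have hpart2 : ∑ s ∈ Finset.Ico (t - N₁ + 1) (t + 1), r ^ s * a (t - s) < ε / 2 := by
    have hbound : ∀ s ∈ Finset.Ico (t - N₁ + 1) (t + 1), r ^ s * a (t - s) ≤ r ^ N₂ * M := by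
      intro s hs
      rw [Finset.mem_Ico] at hs
      have hsN : N₂ ≤ s := by omega
      exact mul_le_mul (pow_le_pow_of_le_one hr0 hr1.le hsN) (hMb _) (ha0 _) (pow_nonneg hr0 _)
    calc ∑ s ∈ Finset.Ico (t - N₁ + 1) (t + 1), r ^ s * a (t - s)
        ≤ (Finset.Ico (t - N₁ + 1) (t + 1)).card • (r ^ N₂ * M) :=
          Finset.sum_le_card_nsmul _ _ _ hbound
      _ ≤ (N₁ : ℝ) * (r ^ N₂ * M) := by
          rw [nsmul_eq_mul, Nat.card_Ico]
          apply mul_le_mul_of_nonneg_right _ (by positivity)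
          have hc : (t + 1) - (t - N₁ + 1) ≤ N₁ := by omega
          exact_mod_cast Nat.cast_le.mpr hc
      _ = (N₁ : ℝ) * M * r ^ N₂ := by ring
      _ < ε / 2 := hN₂'
  linarith

end Aux

/-- **Proposition 2.** Let `W` be a real symmetric `m×m` matrix with `1ᵀW = 1ᵀ`,
`W1 = 1` and `ρ(W − 11ᵀ/m) < 1`.  For noise vectors `ε_t` define
`z_{t+1} = W^{t+1}z₀ + Σ_{s=0}^{t} Wˢ(W−I)ε_{t−s}` and let
`σ_t² = (1/m)·‖ε_t − (11ᵀ/m)ε_t‖²` be the sample variance of `ε_t`.  If `σ_t² → 0`, then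
`‖z_{t+1} − (11ᵀ/m)z₀‖ → 0`: the nodes converge to the average of the initial values. -/
theorem prop2_convergence_of_vanishing_noise_variance {m : ℕ}
    (W : Matrix (Fin m) (Fin m) ℝ) (hsym : W.IsSymm)
    (hcol : Matrix.vecMul (fun _ => (1 : ℝ)) W = fun _ => 1)
    (hrow : W.mulVec (fun _ => (1 : ℝ)) = fun _ => 1)
    (hρ : spectralRadius ℝ (W - avgMat m) < 1)
    (z₀ : Fin m → ℝ) (ε : ℕ → Fin m → ℝ) (z : ℕ → Fin m → ℝ)
    (hz : ∀ t, z (t + 1) = (W ^ (t + 1)).mulVec z₀ +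
        ∑ s ∈ Finset.range (t + 1), (W ^ s * (W - 1)).mulVec (ε (t - s)))
    (hσ : Tendsto (fun t => (1 / (m : ℝ)) * eucNorm (ε t - (avgMat m).mulVec (ε t)) ^ 2)
        atTop (nhds 0)) :
    Tendsto (fun t => eucNorm (z (t + 1) - (avgMat m).mulVec z₀)) atTop (nhds 0) := by
  rcases Nat.eq_zero_or_pos m with hm0 | hm0
  · subst hm0
    have hzero : (fun t => eucNorm (z (t + 1) - (avgMat 0).mulVec z₀)) = fun _ => 0 := by
      funext t
      simp [eucNorm]
    rw [hzero]
    exact tendsto_const_nhds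
  -- now m > 0
  haveI : Nonempty (Fin m) := Fin.pos_iff_nonempty.mp hm0
  have hmR : (m : ℝ) ≠ 0 := Nat.cast_ne_zero.mpr hm0.ne'
  set P : Matrix (Fin m) (Fin m) ℝ := avgMat m with hPdef
  set B : Matrix (Fin m) (Fin m) ℝ := W - P with hBdef
  -- basic algebra
  have hrow' : ∀ i, ∑ k, W i k = 1 := by
    intro i
    have h := congrFun hrow i
    simpa [Matrix.mulVec, dotProduct] using h
  have hcol' : ∀ j, ∑ k, W k j = 1 := by
    intro j
    have h := congrFun hcol j
    simpa [Matrix.vecMul, dotProduct] using h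
  have hWP : W * P = P := by
    ext i j
    simp only [Matrix.mul_apply, hPdef, avgMat, Matrix.of_apply]
    rw [← Finset.sum_mul, hrow' i, one_mul]
  have hPW : P * W = P := by
    ext i j
    simp only [Matrix.mul_apply, hPdef, avgMat, Matrix.of_apply]
    rw [← Finset.mul_sum, hcol' j, mul_one]
  have hPP : P * P = P := by
    ext i j
    simp only [Matrix.mul_apply, hPdef, avgMat, Matrix.of_apply]
    rw [Finset.sum_const, Finset.card_univ, Fintype.card_fin, nsmul_eq_mul]
    field_simp
  have hBP : B * P = 0 := by rw [hBdef, sub_mul, hWP, hPP, sub_self]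
  have hPB : P * B = 0 := by rw [hBdef, mul_sub, hPW, hPP, sub_self]
  have hPW1 : P * (W - 1) = 0 := by rw [mul_sub, Matrix.mul_one, hPW, sub_self]
  have hW1P : (W - 1) * P = 0 := by rw [sub_mul, Matrix.one_mul, hWP, sub_self]
  have hpow : ∀ s : ℕ, W ^ (s + 1) = B ^ (s + 1) + P := by
    intro s
    induction s with
    | zero => simp [hBdef]
    | succ n ih =>
        have hBpow : B ^ (n + 1) * P = 0 := by
          rw [pow_succ, Matrix.mul_assoc, hBP, Matrix.mul_zero]
        calc W ^ (n + 2) = W ^ (n + 1) * W := by rw [pow_succ]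
          _ = (B ^ (n + 1) + P) * W := by rw [ih]
          _ = B ^ (n + 1) * W + P := by rw [add_mul, hPW]
          _ = B ^ (n + 1) * (B + P) + P := by
              congr 2
              rw [hBdef]
              abel
          _ = B ^ (n + 2) + P := by
              rw [mul_add, hBpow, add_zero, ← pow_succ]
  have hWs : ∀ s : ℕ, W ^ s * (W - 1) = B ^ s * (W - 1) := by
    intro s
    match s with
    | 0 => simp
    | s + 1 => rw [hpow s, add_mul, hPW1, add_zero]
  -- the centered noise
  set e : ℕ → Fin m → ℝ := fun u => ε u - P.mulVec (ε u) with hedef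
  have hterm : ∀ (s u : ℕ), (W ^ s * (W - 1)).mulVec (ε u) = (B ^ s * (W - 1)).mulVec (e u) := by
    intro s u
    rw [hedef]
    have h1 : (B ^ s * (W - 1)).mulVec (ε u - P.mulVec (ε u))
        = (B ^ s * (W - 1)).mulVec (ε u) - (B ^ s * (W - 1)).mulVec (P.mulVec (ε u)) := by
      rw [Matrix.mulVec_sub]
    have h2 : (B ^ s * (W - 1)).mulVec (P.mulVec (ε u)) = 0 := by
      rw [Matrix.mulVec_mulVec, Matrix.mul_assoc, hW1P, Matrix.mul_zero, Matrix.zero_mulVec]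
    rw [h1, h2, sub_zero, hWs]
  have key : ∀ t, z (t + 1) - P.mulVec z₀
      = (B ^ (t + 1)).mulVec z₀
        + ∑ s ∈ Finset.range (t + 1), (B ^ s * (W - 1)).mulVec (e (t - s)) := by
    intro t
    rw [hz t, hpow t, Matrix.add_mulVec]
    rw [Finset.sum_congr rfl fun s _ => hterm s (t - s)]
    abel
  -- the symmetric matrix B and its eigenvalues
  have hBh : B.IsHermitian := by
    rw [Matrix.IsHermitian, Matrix.conjTranspose_eq_transpose_of_trivial]
    ext i j
    have hWij : W j i = W i j := by
      have h := congrFun (congrFun hsym i) j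
      simpa [Matrix.transpose_apply] using h
    simp [hBdef, Matrix.transpose_apply, hPdef, avgMat, hWij]
  set lam : Fin m → ℝ := hBh.eigenvalues with hlam
  have habs : ∀ i, |lam i| < 1 := by
    intro i
    have hmem : lam i ∈ spectrum ℝ B := hBh.eigenvalues_mem_spectrum_real i
    have hle : (‖lam i‖₊ : ENNReal) ≤ spectralRadius ℝ B := by
      rw [spectralRadius]
      exact le_iSup₂ (f := fun k (_ : k ∈ spectrum ℝ B) => (‖k‖₊ : ENNReal)) (lam i) hmem
    have hlt : (‖lam i‖₊ : ENNReal) < 1 := lt_of_le_of_lt hle hρ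
    rw [← ENNReal.coe_one, ENNReal.coe_lt_coe] at hlt
    rw [← Real.norm_eq_abs, ← coe_nnnorm]
    exact_mod_cast hlt
  set r : ℝ := Finset.univ.sup' Finset.univ_nonempty (fun i => |lam i|) with hrdef
  have hev : ∀ i, |lam i| ≤ r := by
    intro i
    rw [hrdef]
    exact Finset.le_sup' (fun j => |lam j|) (Finset.mem_univ i)
  have hr0 : 0 ≤ r := le_trans (abs_nonneg _) (hev (Classical.arbitrary _))
  have hr1 : r < 1 := by
    rw [hrdef, Finset.sup'_lt_iff]
    exact fun i _ => habs i
  have hstep : ∀ (n : ℕ) (v : Fin m → ℝ), eucNorm ((B ^ n).mulVec v) ≤ r ^ n * eucNorm v := by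
    intro n
    induction n with
    | zero => intro v; simp
    | succ k ih =>
        intro v
        have h1 : (B ^ (k + 1)).mulVec v = (B ^ k).mulVec (B.mulVec v) := by
          rw [Matrix.mulVec_mulVec, ← pow_succ]
        rw [h1]
        calc eucNorm ((B ^ k).mulVec (B.mulVec v)) ≤ r ^ k * eucNorm (B.mulVec v) := ih _
          _ ≤ r ^ k * (r * eucNorm v) := by
              exact mul_le_mul_of_nonneg_left (eucNorm_symm_mulVec_le hBh hr0 hev v)
                (pow_nonneg hr0 k)
          _ = r ^ (k + 1) * eucNorm v := by ring
  -- bound on W - 1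
  obtain ⟨C, hC0, hC⟩ := exists_mulVec_bound (W - 1)
  -- the noise norms tend to zero
  set a : ℕ → ℝ := fun u => eucNorm (e u) with hadef
  have ha0 : ∀ u, 0 ≤ a u := fun u => eucNorm_nonneg _
  have hasq : Tendsto (fun t => a t ^ 2) atTop (nhds 0) := by
    have h := hσ.const_mul (m : ℝ)
    rw [mul_zero] at h
    have heq : (fun t => (m : ℝ) * ((1 / (m : ℝ)) * eucNorm (ε t - (avgMat m).mulVec (ε t)) ^ 2))
        = fun t => a t ^ 2 := by
      funext t
      rw [hadef, hedef, hPdef]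
      field_simp
    rwa [heq] at h
  have ha : Tendsto a atTop (nhds 0) := by
    have h := hasq.sqrt
    rw [Real.sqrt_zero] at h
    have heq : (fun t => Real.sqrt (a t ^ 2)) = a := by
      funext t
      exact Real.sqrt_sq (ha0 t)
    rwa [heq] at h
  -- the final bound
  have hbound : ∀ t, eucNorm (z (t + 1) - P.mulVec z₀)
      ≤ eucNorm z₀ * r ^ (t + 1) + ∑ s ∈ Finset.range (t + 1), r ^ s * (C * a (t - s)) := by
    intro t
    rw [key t]
    refine le_trans (eucNorm_add_le _ _) (add_le_add ?_ ?_)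
    · calc eucNorm ((B ^ (t + 1)).mulVec z₀) ≤ r ^ (t + 1) * eucNorm z₀ := hstep _ _
        _ = eucNorm z₀ * r ^ (t + 1) := by ring
    · refine le_trans (eucNorm_sum_le _ _) (Finset.sum_le_sum fun s _ => ?_)
      have h1 : (B ^ s * (W - 1)).mulVec (e (t - s)) = (B ^ s).mulVec ((W - 1).mulVec (e (t - s))) := by
        rw [Matrix.mulVec_mulVec]
      rw [h1]
      calc eucNorm ((B ^ s).mulVec ((W - 1).mulVec (e (t - s))))
          ≤ r ^ s * eucNorm ((W - 1).mulVec (e (t - s))) := hstep _ _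
        _ ≤ r ^ s * (C * a (t - s)) :=
            mul_le_mul_of_nonneg_left (hC _) (pow_nonneg hr0 s)
  -- RHS tends to zero
  have ht1 : Tendsto (fun t : ℕ => eucNorm z₀ * r ^ (t + 1)) atTop (nhds 0) := by
    have h := ((tendsto_pow_atTop_nhds_zero_of_lt_one hr0 hr1).comp
      (tendsto_add_atTop_nat 1)).const_mul (eucNorm z₀)
    simpa [Function.comp] using h
  have ht2 : Tendsto (fun t => ∑ s ∈ Finset.range (t + 1), r ^ s * (C * a (t - s)))
      atTop (nhds 0) := by
    apply conv_tendsto_zero hr0 hr1 (fun u => mul_nonneg hC0 (ha0 u))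
    have h := ha.const_mul C
    rwa [mul_zero] at h
  have hrhs : Tendsto (fun t => eucNorm z₀ * r ^ (t + 1)
      + ∑ s ∈ Finset.range (t + 1), r ^ s * (C * a (t - s))) atTop (nhds 0) := by
    have h := ht1.add ht2
    rwa [add_zero] at h
  exact squeeze_zero (fun t => eucNorm_nonneg _) hbound hrhs
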